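/- Let G be a finite group with a symmetric generating subset S not containing the identity. If all eigenvalues of the Cayley graph Cay(G,S) are integers, then |G| divides 2·(2|S|-1)!. -/

import Mathlib

open Classical in
/-- Adjacency matrix of the Cayley graph `Cay(G,S)`: `x ~ y` iff `x * y⁻¹ ∈ S`. -/
noncomputable def cayleyMatrix {G : Type*} [Group G] (S : Set G) : Matrix G G ℝ :=
  fun x y => if x * y⁻¹ ∈ S then 1 else 0

/-- All eigenvalues of the real matrix `A` are integers. -/
noncomputable def isIntegralMatrix {n : Type*} [Finite n] (A : Matrix n n ℝ) : Prop :=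
  letI := Fintype.ofFinite n
  letI := Classical.decEq n
  ∀ μ : ℝ, Module.End.HasEigenvalue (Matrix.toLin' A) μ → ∃ z : ℤ, μ = (z : ℝ)

namespace CayAux
open Matrix

variable {G : Type*} [Group G] [Fintype G]

lemma mulVec_eq (S : Finset G) (v : G → ℝ) (x : G) :
    (cayleyMatrix (S : Set G) *ᵥ v) x = ∑ s ∈ S, v (s⁻¹ * x) := by
  classical
  have h0 : (cayleyMatrix (S : Set G) *ᵥ v) x
      = ∑ y, cayleyMatrix (S : Set G) x y * v y := rfl
  rw [h0, show (∑ y, cayleyMatrix (S:Set G) x y * v y)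
      = ∑ y ∈ Finset.univ.filter (fun y => x * y⁻¹ ∈ S), v y by
    rw [Finset.sum_filter]
    refine Finset.sum_congr rfl fun y _ => ?_
    simp only [cayleyMatrix]
    by_cases h : x * y⁻¹ ∈ S
    · rw [if_pos h, if_pos (by exact_mod_cast h), one_mul]
    · rw [if_neg h, if_neg (by exact_mod_cast h), zero_mul]]
  refine (Finset.sum_bij (fun s _ => s⁻¹ * x) ?_ ?_ ?_ ?_).symm
  · intro s hs
    simp only [Finset.mem_filter, Finset.mem_univ, true_and]
    have : x * (s⁻¹ * x)⁻¹ = s := by group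
    rw [this]; exact hs
  · intro a ha b hb h
    have := mul_right_cancel h
    simpa using congrArg Inv.inv this
  · intro y hy
    simp only [Finset.mem_filter, Finset.mem_univ, true_and] at hy
    exact ⟨x * y⁻¹, hy, by group⟩
  · intro s hs; rfl

omit [Fintype G] in
lemma isHermitian (S : Finset G) (hsym : ∀ s ∈ S, s⁻¹ ∈ S) :
    (cayleyMatrix (S : Set G)).IsHermitian := by
  classical
  ext x y
  simp only [cayleyMatrix, Matrix.conjTranspose_apply, starRingEnd_apply, star_trivial]
  by_cases h : y * x⁻¹ ∈ S
  · rw [if_pos (by exact_mod_cast h), if_pos]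
    have h2 := hsym _ h
    rwa [_root_.mul_inv_rev, inv_inv] at h2
  · rw [if_neg (by exact_mod_cast h), if_neg]
    intro hc
    have h2 := hsym (x * y⁻¹) (by exact_mod_cast hc)
    rw [_root_.mul_inv_rev, inv_inv] at h2
    exact h h2

lemma mulVec_ones (S : Finset G) :
    cayleyMatrix (S : Set G) *ᵥ (fun _ => (1:ℝ)) = fun _ => (S.card : ℝ) := by
  funext x
  rw [mulVec_eq]
  simp

end CayAux

namespace CayAux
open Matrix

variable {G : Type*} [Group G] [Fintype G]

lemma sum_eq_card_max {α : Type*} (s : Finset α) (f : α → ℝ) (M : ℝ)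
    (hle : ∀ i ∈ s, f i ≤ M) (hsum : ∑ i ∈ s, f i = s.card * M) :
    ∀ i ∈ s, f i = M := by
  intro i hi
  by_contra hne
  have hlt : f i < M := lt_of_le_of_ne (hle i hi) hne
  have : ∑ j ∈ s, f j < ∑ j ∈ s, M :=
    Finset.sum_lt_sum hle ⟨i, hi, hlt⟩
  rw [Finset.sum_const, nsmul_eq_mul] at this
  rw [hsum] at this
  exact lt_irrefl _ this

/-- propagation through the generated subgroup -/
lemma propagate (S : Finset G) (hsym : ∀ s ∈ S, s⁻¹ ∈ S)
    (hgen : Subgroup.closure (S : Set G) = ⊤)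
    (U : Set G) (hU : ∀ x ∈ U, ∀ s ∈ S, s⁻¹ * x ∈ U) (x₀ : G) (hx₀ : x₀ ∈ U) :
    ∀ x, x ∈ U := by
  have key : ∀ g : G, (∀ x ∈ U, g * x ∈ U ∧ g⁻¹ * x ∈ U) := by
    intro g
    have hg : g ∈ Subgroup.closure (S : Set G) := by rw [hgen]; trivial
    refine Subgroup.closure_induction ?_ ?_ ?_ ?_ hg
    · intro s hs x hx
      have hs' : s ∈ S := by exact_mod_cast hs
      constructor
      · have := hU x hx (s⁻¹) (hsym s hs')
        rwa [inv_inv] at this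
      · exact hU x hx s hs'
    · intro x hx
      constructor <;> simpa using hx
    · intro a b _ _ ha hb x hx
      constructor
      · have := (ha (b * x) (hb x hx).1).1
        rwa [mul_assoc]
      · have := (hb (a⁻¹ * x) (ha x hx).2).2
        rwa [_root_.mul_inv_rev, mul_assoc]
    · intro a _ ha x hx
      have h1 := (ha x hx).2
      have h2 := (ha x hx).1
      constructor
      · exact h1
      · simpa using h2
  intro x
  have := (key (x * x₀⁻¹) x₀ hx₀).1
  rwa [inv_mul_cancel_right] at this

end CayAux

namespace CayAux
open Matrix
set_option linter.unusedSectionVars false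

variable {G : Type*} [Group G] [Fintype G]

lemma symm_entries {A : Matrix G G ℝ} (hA : A.IsHermitian) (x y : G) : A x y = A y x := by
  have := congrFun (congrFun hA.symm x) y
  simpa [Matrix.conjTranspose_apply] using this

lemma orth {A : Matrix G G ℝ} (hA : A.IsHermitian) {u v : G → ℝ} {lam mu : ℝ}
    (hu : A *ᵥ u = lam • u) (hv : A *ᵥ v = mu • v) (hne : lam ≠ mu) :
    ∑ x, u x * v x = 0 := by
  have h1 : ∑ x, (A *ᵥ u) x * v x = lam * ∑ x, u x * v x := by
    rw [hu, Finset.mul_sum]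
    refine Finset.sum_congr rfl fun x _ => ?_
    simp [mul_assoc]
  have h2 : ∑ x, (A *ᵥ u) x * v x = mu * ∑ x, u x * v x := by
    have expand : ∑ x, (A *ᵥ u) x * v x = ∑ x, ∑ y, A x y * u y * v x := by
      refine Finset.sum_congr rfl fun x _ => ?_
      rw [show (A *ᵥ u) x = ∑ y, A x y * u y from rfl, Finset.sum_mul]
    rw [expand, Finset.sum_comm]
    have : ∀ y, ∑ x, A x y * u y * v x = u y * (A *ᵥ v) y := by
      intro y
      rw [show (A *ᵥ v) y = ∑ x, A y x * v x from rfl, Finset.mul_sum]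
      refine Finset.sum_congr rfl fun x _ => ?_
      rw [symm_entries hA x y]; ring
    rw [Finset.sum_congr rfl fun y _ => this y, hv, Finset.mul_sum]
    refine Finset.sum_congr rfl fun y _ => ?_
    simp [mul_assoc]; ring
  have heq := h1.symm.trans h2
  have hzero : (lam - mu) * ∑ x, u x * v x = 0 := by ring_nf; linarith [heq]
  rcases mul_eq_zero.mp hzero with h | h
  · exact absurd (sub_eq_zero.mp h) hne
  · exact h

end CayAux

namespace CayAux
open Matrix
set_option linter.unusedSectionVars false

variable {G : Type*} [Group G] [Fintype G]

lemma eig_bound (S : Finset G) {v : G → ℝ} {mu : ℝ} (hv : v ≠ 0)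
    (h : cayleyMatrix (S : Set G) *ᵥ v = mu • v) : |mu| ≤ (S.card : ℝ) := by
  obtain ⟨x₀, -, hmax⟩ := Finset.exists_max_image Finset.univ (fun x => |v x|)
    ⟨1, Finset.mem_univ 1⟩
  have hmax' : ∀ x, |v x| ≤ |v x₀| := fun x => hmax x (Finset.mem_univ x)
  have hM : 0 < |v x₀| := by
    rcases Function.ne_iff.mp hv with ⟨x, hx⟩
    calc (0:ℝ) < |v x| := abs_pos.mpr hx
    _ ≤ |v x₀| := hmax' x
  have key : |mu| * |v x₀| ≤ (S.card : ℝ) * |v x₀| := by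
    have h1 : |mu * v x₀| = |(cayleyMatrix (S : Set G) *ᵥ v) x₀| := by
      rw [h]; simp
    rw [← abs_mul]
    calc |mu * v x₀| = |∑ s ∈ S, v (s⁻¹ * x₀)| := by rw [h1, mulVec_eq]
    _ ≤ ∑ s ∈ S, |v (s⁻¹ * x₀)| := Finset.abs_sum_le_sum_abs _ _
    _ ≤ ∑ s ∈ S, |v x₀| := Finset.sum_le_sum fun s _ => hmax' _
    _ = (S.card : ℝ) * |v x₀| := by rw [Finset.sum_const, nsmul_eq_mul]
  exact le_of_mul_le_mul_right key hM

lemma eig_top (S : Finset G) (hsym : ∀ s ∈ S, s⁻¹ ∈ S)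
    (hgen : Subgroup.closure (S : Set G) = ⊤) {v : G → ℝ}
    (h : cayleyMatrix (S : Set G) *ᵥ v = (S.card : ℝ) • v) :
    ∀ x y, v x = v y := by
  obtain ⟨x₀, -, hmax⟩ := Finset.exists_max_image Finset.univ v ⟨1, Finset.mem_univ 1⟩
  have hmax' : ∀ x, v x ≤ v x₀ := fun x => hmax x (Finset.mem_univ x)
  set U : Set G := {x | v x = v x₀} with hU
  have hstep : ∀ x ∈ U, ∀ s ∈ S, s⁻¹ * x ∈ U := by
    intro x hx s hs
    have hx' : v x = v x₀ := hx
    have hsum : ∑ s ∈ S, v (s⁻¹ * x) = (S.card : ℝ) * v x₀ := by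
      have := congrFun h x
      rw [mulVec_eq] at this
      rw [this]; simp [hx']
    have := sum_eq_card_max S (fun s => v (s⁻¹ * x)) (v x₀)
      (fun s _ => hmax' _) hsum s hs
    exact this
  have hall := propagate S hsym hgen U hstep x₀ rfl
  intro x y
  have hx : v x = v x₀ := hall x
  have hy : v y = v x₀ := hall y
  rw [hx, hy]

lemma eig_neg (S : Finset G) (hsym : ∀ s ∈ S, s⁻¹ ∈ S)
    (hgen : Subgroup.closure (S : Set G) = ⊤) {v : G → ℝ} (hv : v ≠ 0)
    (h : cayleyMatrix (S : Set G) *ᵥ v = (-(S.card : ℝ)) • v) :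
    ∃ M : ℝ, 0 < M ∧ (∀ x, |v x| = M) ∧ (∀ x, ∀ s ∈ S, v (s⁻¹ * x) = - v x) := by
  obtain ⟨x₀, -, hmax⟩ := Finset.exists_max_image Finset.univ (fun x => |v x|)
    ⟨1, Finset.mem_univ 1⟩
  have hmax' : ∀ x, |v x| ≤ |v x₀| := fun x => hmax x (Finset.mem_univ x)
  set M := |v x₀| with hMdef
  have hM : 0 < M := by
    rcases Function.ne_iff.mp hv with ⟨x, hx⟩
    calc (0:ℝ) < |v x| := abs_pos.mpr hx
    _ ≤ M := hmax' x
  have hstep : ∀ x, |v x| = M → ∀ s ∈ S, v (s⁻¹ * x) = - v x := by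
    intro x hx s hs
    have hsum : ∑ s ∈ S, v (s⁻¹ * x) = -((S.card : ℝ) * v x) := by
      have := congrFun h x
      rw [mulVec_eq] at this
      rw [this]; simp
    rcases le_or_gt 0 (v x) with hpos | hneg
    · have hvx : v x = M := by rw [← hx, abs_of_nonneg hpos]
      have hsum' : ∑ s ∈ S, (fun s => - v (s⁻¹ * x)) s = (S.card : ℝ) * M := by
        rw [Finset.sum_neg_distrib, hsum, hvx]; ring
      have h9 := sum_eq_card_max S (fun s => - v (s⁻¹ * x)) M
        (fun s _ => by
          show - v (s⁻¹ * x) ≤ M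
          exact le_trans (neg_le_abs _) (hmax' _)) hsum' s hs
      have h10 : - v (s⁻¹ * x) = M := h9
      have h11 : v (s⁻¹ * x) = -M := by linarith
      rw [h11, hvx]
    · have hvx : v x = -M := by
        rw [← hx, abs_of_neg hneg]; ring
      have hsum' : ∑ s ∈ S, v (s⁻¹ * x) = (S.card : ℝ) * M := by
        rw [hsum, hvx]; ring
      have h9 := sum_eq_card_max S (fun s => v (s⁻¹ * x)) M
        (fun s _ => by
          show v (s⁻¹ * x) ≤ M
          exact le_trans (le_abs_self _) (hmax' _)) hsum' s hs
      have h10 : v (s⁻¹ * x) = M := h9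
      rw [h10, hvx]; ring
  set U : Set G := {x | |v x| = M} with hUdef
  have hstepU : ∀ x ∈ U, ∀ s ∈ S, s⁻¹ * x ∈ U := by
    intro x hx s hs
    have := hstep x hx s hs
    show |v (s⁻¹ * x)| = M
    rw [this, abs_neg]; exact hx
  have hall := propagate S hsym hgen U hstepU x₀ rfl
  exact ⟨M, hM, hall, fun x s hs => hstep x (hall x) s hs⟩

end CayAux

namespace CayAux
open Matrix Polynomial
set_option linter.unusedSectionVars false

variable {G : Type*} [Group G] [Fintype G] [DecidableEq G]

lemma pow_mulVec (A : Matrix G G ℝ) {v : G → ℝ} {mu : ℝ}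
    (h : A *ᵥ v = mu • v) (n : ℕ) : A ^ n *ᵥ v = mu ^ n • v := by
  induction n with
  | zero => simp [Matrix.one_mulVec]
  | succ n ih =>
      rw [pow_succ, ← Matrix.mulVec_mulVec, h, Matrix.mulVec_smul, ih, smul_smul]
      ring_nf

lemma aeval_mulVec_real (A : Matrix G G ℝ) (q : Polynomial ℝ) {v : G → ℝ} {mu : ℝ}
    (h : A *ᵥ v = mu • v) : (aeval A q) *ᵥ v = q.eval mu • v := by
  induction q using Polynomial.induction_on' with
  | add p r hp hr =>
      rw [map_add, Matrix.add_mulVec, hp, hr, eval_add, add_smul]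
  | monomial n c =>
      rw [aeval_monomial, eval_monomial, ← Algebra.smul_def,
        Matrix.smul_mulVec, pow_mulVec A h n, smul_smul]

lemma aeval_mulVec (A : Matrix G G ℝ) (q : Polynomial ℤ) {v : G → ℝ} {mu : ℝ}
    (h : A *ᵥ v = mu • v) :
    (aeval A q) *ᵥ v = ((q.eval₂ (Int.castRingHom ℝ) mu)) • v := by
  have h1 : aeval A q = aeval A (q.map (Int.castRingHom ℝ)) := by
    rw [show (Int.castRingHom ℝ) = algebraMap ℤ ℝ from rfl, aeval_map_algebraMap]
  rw [h1, aeval_mulVec_real A _ h, eval_map]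

open Classical in
noncomputable def intCayley (S : Finset G) : Matrix G G ℤ :=
  fun x y => if x * y⁻¹ ∈ S then 1 else 0

lemma intCayley_map (S : Finset G) :
    (intCayley S).map (Int.cast : ℤ → ℝ) = cayleyMatrix (S : Set G) := by
  ext x y
  simp only [Matrix.map_apply, intCayley, cayleyMatrix]
  by_cases h : x * y⁻¹ ∈ S
  · rw [if_pos h, if_pos (by exact_mod_cast h)]; norm_num
  · rw [if_neg h, if_neg (by exact_mod_cast h)]; norm_num

lemma aeval_cayley_int (S : Finset G) (q : Polynomial ℤ) :
    aeval (cayleyMatrix (S : Set G)) q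
      = (aeval (intCayley S) q).map (Int.cast : ℤ → ℝ) := by
  have h2 := aeval_algHom_apply ((Int.castRingHom ℝ).mapMatrix.toIntAlgHom) (intCayley S) q
  rw [show ((aeval (intCayley S) q).map (Int.cast : ℤ → ℝ))
      = (Int.castRingHom ℝ).mapMatrix.toIntAlgHom ((aeval (intCayley S)) q) from rfl, ← h2]
  have h3 : ((Int.castRingHom ℝ).mapMatrix.toIntAlgHom (intCayley S)) = cayleyMatrix (S : Set G) :=
    intCayley_map S
  rw [h3]; rfl

end CayAux

namespace CayAux
open Polynomial

noncomputable def qpoly (k : ℕ) : Polynomial ℤ :=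
  ∏ j ∈ Finset.Icc (1 - (k:ℤ)) ((k:ℤ) - 1), (X - C j)

lemma qpoly_eval (k : ℕ) (z : ℤ) :
    (qpoly k).eval z = ∏ j ∈ Finset.Icc (1 - (k:ℤ)) ((k:ℤ) - 1), (z - j) := by
  simp [qpoly, eval_prod]

lemma qpoly_eval_zero (k : ℕ) (z : ℤ) (h1 : 1 - (k:ℤ) ≤ z) (h2 : z ≤ (k:ℤ) - 1) :
    (qpoly k).eval z = 0 := by
  rw [qpoly_eval]
  exact Finset.prod_eq_zero (Finset.mem_Icc.mpr ⟨h1, h2⟩) (by ring)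

lemma prod_Icc_int_fact (n : ℕ) :
    (∏ j ∈ Finset.Icc (1:ℤ) (n:ℤ), j) = (n.factorial : ℤ) := by
  induction n with
  | zero => simp
  | succ n ih =>
      have hins : Finset.Icc (1:ℤ) ((n:ℤ)+1) = insert ((n:ℤ)+1) (Finset.Icc (1:ℤ) (n:ℤ)) := by
        ext a
        simp only [Finset.mem_Icc, Finset.mem_insert]
        omega
      have hnotmem : ((n:ℤ)+1) ∉ Finset.Icc (1:ℤ) (n:ℤ) := by
        simp only [Finset.mem_Icc]; omega
      have hc : ((n+1:ℕ):ℤ) = (n:ℤ) + 1 := by push_cast; ring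
      rw [hc, hins, Finset.prod_insert hnotmem, ih, Nat.factorial_succ]
      push_cast; ring

lemma qpoly_eval_top (k : ℕ) (hk : 1 ≤ k) :
    (qpoly k).eval (k:ℤ) = ((2*k-1).factorial : ℤ) := by
  rw [qpoly_eval]
  rw [show (∏ j ∈ Finset.Icc (1 - (k:ℤ)) ((k:ℤ) - 1), ((k:ℤ) - j))
      = ∏ i ∈ Finset.Icc (1:ℤ) (((2*k-1 : ℕ)):ℤ), i from ?_]
  · exact prod_Icc_int_fact (2*k-1)
  · have hcast : ((2*k-1 : ℕ):ℤ) = 2*(k:ℤ) - 1 := by omega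
    refine Finset.prod_nbij' (fun j => (k:ℤ) - j) (fun i => (k:ℤ) - i) ?_ ?_ ?_ ?_ ?_
    · intro a ha
      rw [Finset.mem_Icc] at ha
      show (k:ℤ) - a ∈ _
      rw [Finset.mem_Icc, hcast]
      omega
    · intro a ha
      rw [Finset.mem_Icc, hcast] at ha
      show (k:ℤ) - a ∈ _
      rw [Finset.mem_Icc]
      omega
    · intro a _
      show (k:ℤ) - ((k:ℤ) - a) = a
      ring
    · intro a _
      show (k:ℤ) - ((k:ℤ) - a) = a
      ring
    · intro a _; rfl

lemma qpoly_eval_bot (k : ℕ) (hk : 1 ≤ k) :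
    (qpoly k).eval (-(k:ℤ)) = -((2*k-1).factorial : ℤ) := by
  rw [qpoly_eval]
  have hcard : (Finset.Icc (1 - (k:ℤ)) ((k:ℤ) - 1)).card = 2*k-1 := by
    rw [Int.card_Icc]
    omega
  have h1 : (∏ j ∈ Finset.Icc (1 - (k:ℤ)) ((k:ℤ) - 1), (-(k:ℤ) - j))
      = ∏ j ∈ Finset.Icc (1 - (k:ℤ)) ((k:ℤ) - 1), (-1) * ((k:ℤ) + j) := by
    refine Finset.prod_congr rfl fun j _ => by ring
  rw [h1, Finset.prod_mul_distrib, Finset.prod_const, hcard]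
  have hodd : Odd (2*k-1) := ⟨k-1, by omega⟩
  rw [hodd.neg_one_pow]
  have h2 : (∏ j ∈ Finset.Icc (1 - (k:ℤ)) ((k:ℤ) - 1), ((k:ℤ) + j))
      = ∏ j ∈ Finset.Icc (1 - (k:ℤ)) ((k:ℤ) - 1), ((k:ℤ) - j) := by
    refine Finset.prod_nbij' (fun j => -j) (fun i => -i) ?_ ?_ ?_ ?_ ?_
    · intro a ha
      rw [Finset.mem_Icc] at ha
      show -a ∈ _
      rw [Finset.mem_Icc]
      omega
    · intro a ha
      rw [Finset.mem_Icc] at ha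
      show -a ∈ _
      rw [Finset.mem_Icc]
      omega
    · intro a _; show - - a = a; ring
    · intro a _; show - - a = a; ring
    · intro a _; show (k:ℤ) + a = (k:ℤ) - -a; ring
  rw [h2, show (∏ j ∈ Finset.Icc (1 - (k:ℤ)) ((k:ℤ) - 1), ((k:ℤ) - j))
      = ((2*k-1).factorial : ℤ) from ?_]
  · ring
  · have := qpoly_eval_top k hk
    rw [qpoly_eval] at this
    exact this

end CayAux

namespace CayAux
open Matrix
set_option linter.unusedSectionVars false

variable {G : Type*} [Group G] [Fintype G] [DecidableEq G]

lemma matrix_eq_on_basis {A : Matrix G G ℝ} (hA : A.IsHermitian) (M₁ M₂ : Matrix G G ℝ)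
    (h : ∀ i : G, M₁ *ᵥ ⇑(hA.eigenvectorBasis i) = M₂ *ᵥ ⇑(hA.eigenvectorBasis i)) :
    M₁ = M₂ := by
  have hv : ∀ v : EuclideanSpace ℝ G, M₁ *ᵥ (v : G → ℝ) = M₂ *ᵥ (v : G → ℝ) := by
    intro v
    have hmem : v ∈ Submodule.span ℝ (Set.range hA.eigenvectorBasis) := by
      rw [← OrthonormalBasis.coe_toBasis hA.eigenvectorBasis, Module.Basis.span_eq]
      trivial
    refine Submodule.span_induction ?_ ?_ ?_ ?_ hmem
    · rintro x ⟨i, rfl⟩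
      exact h i
    · show M₁ *ᵥ (0 : G → ℝ) = M₂ *ᵥ (0 : G → ℝ)
      rw [Matrix.mulVec_zero, Matrix.mulVec_zero]
    · intro x y _ _ hx hy
      show M₁ *ᵥ ((x : G → ℝ) + (y : G → ℝ)) = M₂ *ᵥ ((x : G → ℝ) + (y : G → ℝ))
      rw [Matrix.mulVec_add, Matrix.mulVec_add, hx, hy]
    · intro c x _ hx
      show M₁ *ᵥ (c • (x : G → ℝ)) = M₂ *ᵥ (c • (x : G → ℝ))
      rw [Matrix.mulVec_smul, Matrix.mulVec_smul, hx]
  ext x y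
  have := congrFun (hv (EuclideanSpace.single y 1)) x
  rw [show ((EuclideanSpace.single y 1 : EuclideanSpace ℝ G) : G → ℝ) = Pi.single y 1 from rfl]
    at this
  rw [Matrix.mulVec_single, Matrix.mulVec_single] at this
  simpa using this

lemma hasEig {n : Type*} [Fintype n] [DecidableEq n] (A : Matrix n n ℝ) (μ : ℝ) {v : n → ℝ}
    (hv : v ≠ 0) (h : A *ᵥ v = μ • v) :
    Module.End.HasEigenvalue (Matrix.toLin' A) μ :=
  Module.End.hasEigenvalue_of_hasEigenvector
    ⟨Module.End.mem_eigenspace_iff.mpr (by rw [Matrix.toLin'_apply, h]), hv⟩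

lemma helper_mulVec (a c : ℝ) (w u : G → ℝ) :
    (Matrix.of fun x y => a + c * (w x * w y)) *ᵥ u
      = fun x => a * (∑ y, u y) + c * w x * (∑ y, w y * u y) := by
  funext x
  have h0 : ((Matrix.of fun x y => a + c * (w x * w y)) *ᵥ u) x
      = ∑ y, (a + c * (w x * w y)) * u y := rfl
  rw [h0]
  rw [show (∑ y, (a + c * (w x * w y)) * u y)
      = ∑ y, (a * u y + (c * w x) * (w y * u y)) from
    Finset.sum_congr rfl fun y _ => by ring]
  rw [Finset.sum_add_distrib, ← Finset.mul_sum, ← Finset.mul_sum]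

end CayAux

namespace CayAux
open Matrix
set_option linter.unusedSectionVars false

variable {G : Type*} [Group G] [Fintype G]

lemma eig_neg_parallel (S : Finset G) (hsym : ∀ s ∈ S, s⁻¹ ∈ S)
    (hgen : Subgroup.closure (S : Set G) = ⊤) {w u : G → ℝ}
    (hw : cayleyMatrix (S : Set G) *ᵥ w = (-(S.card:ℝ)) • w)
    (hu : cayleyMatrix (S : Set G) *ᵥ u = (-(S.card:ℝ)) • u) :
    w 1 • u = u 1 • w := by
  set d := w 1 • u - u 1 • w with hd
  have hAd : cayleyMatrix (S : Set G) *ᵥ d = (-(S.card:ℝ)) • d := by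
    rw [hd, Matrix.mulVec_sub, Matrix.mulVec_smul, Matrix.mulVec_smul, hw, hu]
    rw [smul_sub, smul_comm (w 1), smul_comm (u 1)]
  by_cases h0 : d = 0
  · exact sub_eq_zero.mp h0
  · obtain ⟨M, hM, habs, -⟩ := eig_neg S hsym hgen h0 hAd
    have h1 : d 1 = 0 := by
      simp only [hd, Pi.sub_apply, Pi.smul_apply, smul_eq_mul]
      ring
    have h2 := habs 1
    rw [h1, abs_zero] at h2
    exact absurd h2.symm (ne_of_gt hM)

end CayAux

theorem card_dvd_two_mul_factorial (G : Type*) [Group G] [Fintype G]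
    (S : Finset G)
    (hsym : ∀ s ∈ S, s⁻¹ ∈ S) (h1 : (1 : G) ∉ S)
    (hgen : Subgroup.closure (S : Set G) = ⊤)
    (hint : isIntegralMatrix (cayleyMatrix (S : Set G))) :
    Fintype.card G ∣ 2 * Nat.factorial (2 * S.card - 1) := by
  classical
  open Matrix Polynomial in
  by_cases hS : S = ∅
  · have hall : ∀ g : G, g = 1 := by
      intro g
      have hg : g ∈ Subgroup.closure (S : Set G) := by rw [hgen]; trivial
      rw [hS] at hg
      simpa [Subgroup.closure_empty, Subgroup.mem_bot] using hg
    have hcard : Fintype.card G = 1 := Fintype.card_eq_one_iff.mpr ⟨1, hall⟩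
    rw [hcard]; exact one_dvd _
  obtain ⟨s₀, hs₀⟩ := Finset.nonempty_iff_ne_empty.mpr hS
  have hk1 : 1 ≤ S.card := Finset.card_pos.mpr ⟨s₀, hs₀⟩
  have hN0 : 0 < Fintype.card G := Fintype.card_pos
  have hNR : ((Fintype.card G : ℝ)) ≠ 0 := by positivity
  have hherm : (cayleyMatrix (S : Set G)).IsHermitian := CayAux.isHermitian S hsym
  have hmv : ∀ i : G, cayleyMatrix (S : Set G) *ᵥ ⇑(hherm.eigenvectorBasis i)
      = hherm.eigenvalues i • ⇑(hherm.eigenvectorBasis i) :=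
    fun i => hherm.mulVec_eigenvectorBasis i
  have hbne : ∀ i : G, (⇑(hherm.eigenvectorBasis i) : G → ℝ) ≠ 0 := by
    intro i hzero
    exact hherm.eigenvectorBasis.orthonormal.ne_zero i (by ext x; exact congrFun hzero x)
  have hint' : ∀ μ : ℝ, (∃ v : G → ℝ, v ≠ 0 ∧ cayleyMatrix (S : Set G) *ᵥ v = μ • v) →
      ∃ z : ℤ, μ = (z:ℝ) := by
    rintro μ ⟨v, hv0, hv⟩
    refine hint μ ?_
    rw [Subsingleton.elim (Fintype.ofFinite G) ‹Fintype G›]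
    exact CayAux.hasEig _ μ hv0 hv
  have hintegral : ∀ i : G, ∃ z : ℤ, hherm.eigenvalues i = (z:ℝ) :=
    fun i => hint' _ ⟨_, hbne i, hmv i⟩
  have hbound : ∀ i : G, |hherm.eigenvalues i| ≤ (S.card:ℝ) :=
    fun i => CayAux.eig_bound S (hbne i) (hmv i)
  have hones : cayleyMatrix (S : Set G) *ᵥ (fun _ => (1:ℝ))
      = (S.card:ℝ) • (fun _ => (1:ℝ)) := by
    rw [CayAux.mulVec_ones S]
    funext x; simp
  have hEint : Polynomial.aeval (cayleyMatrix (S : Set G)) (CayAux.qpoly S.card)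
      = (Polynomial.aeval (CayAux.intCayley S) (CayAux.qpoly S.card)).map
          (Int.cast : ℤ → ℝ) := CayAux.aeval_cayley_int S _
  set Fc : ℝ := (((2*S.card-1).factorial : ℤ) : ℝ) with hFc
  have hEact : ∀ i : G, Polynomial.aeval (cayleyMatrix (S : Set G)) (CayAux.qpoly S.card)
        *ᵥ ⇑(hherm.eigenvectorBasis i)
      = ((CayAux.qpoly S.card).eval₂ (Int.castRingHom ℝ) (hherm.eigenvalues i))
        • ⇑(hherm.eigenvectorBasis i) :=
    fun i => CayAux.aeval_mulVec _ _ (hmv i)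
  have hval : ∀ z : ℤ, (CayAux.qpoly S.card).eval₂ (Int.castRingHom ℝ) ((z:ℤ):ℝ)
      = (((CayAux.qpoly S.card).eval z : ℤ) : ℝ) := by
    intro z
    have := Polynomial.eval₂_hom (Int.castRingHom ℝ) z (p := CayAux.qpoly S.card)
    simpa using this
  by_cases hneg : ∃ w : G → ℝ, w ≠ 0 ∧ cayleyMatrix (S : Set G) *ᵥ w = (-(S.card:ℝ)) • w
  · -- bipartite-like case
    obtain ⟨w, hw0, hw⟩ := hneg
    obtain ⟨M, hM, habs, hrel⟩ := CayAux.eig_neg S hsym hgen hw0 hw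
    have hM2 : ((Fintype.card G : ℝ)) * M^2 ≠ 0 := by positivity
    have hkpos : (0:ℝ) < (S.card:ℝ) := by exact_mod_cast hk1
    have hkne : (S.card:ℝ) ≠ -(S.card:ℝ) := by
      intro hc; linarith
    have hsumw : ∑ y, w y = 0 := by
      have h := CayAux.orth hherm hones hw hkne
      simpa using h
    have hwsq : ∀ y : G, w y * w y = M^2 := by
      intro y
      rw [← abs_mul_abs_self (w y), habs y]; ring
    have hsumwsq : ∑ y, w y * w y = ((Fintype.card G : ℝ)) * M^2 := by
      rw [Finset.sum_congr rfl (fun y _ => hwsq y), Finset.sum_const, Finset.card_univ,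
        nsmul_eq_mul]
    have hBw : (Matrix.of fun x y : G => Fc/(Fintype.card G : ℝ)
          + (-(Fc/((Fintype.card G : ℝ)*M^2))) * (w x * w y)) *ᵥ w = (-Fc) • w := by
      rw [CayAux.helper_mulVec]
      funext x
      rw [hsumw, hsumwsq]
      simp only [Pi.smul_apply, smul_eq_mul]
      field_simp
      ring
    have hEB : Polynomial.aeval (cayleyMatrix (S : Set G)) (CayAux.qpoly S.card)
        = Matrix.of fun x y : G => Fc/(Fintype.card G : ℝ)
          + (-(Fc/((Fintype.card G : ℝ)*M^2))) * (w x * w y) := by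
      apply CayAux.matrix_eq_on_basis hherm
      intro i
      set u : G → ℝ := ⇑(hherm.eigenvectorBasis i) with hu
      obtain ⟨z, hz⟩ := hintegral i
      have hzabs : |z| ≤ (S.card:ℤ) := by
        have hb := hbound i
        rw [hz] at hb
        exact_mod_cast hb
      obtain ⟨hza, hzb⟩ := abs_le.mp hzabs
      rcases (by omega : z = (S.card:ℤ) ∨ z = -(S.card:ℤ)
          ∨ (1 - (S.card:ℤ) ≤ z ∧ z ≤ (S.card:ℤ) - 1)) with h|h|h
      · -- eigenvalue S.card
        have hzk : hherm.eigenvalues i = (S.card:ℝ) := by rw [hz, h]; push_cast; ring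
        have hconst := CayAux.eig_top S hsym hgen (by rw [← hzk]; exact hmv i)
        have hvaltop : (CayAux.qpoly S.card).eval₂ (Int.castRingHom ℝ) (hherm.eigenvalues i)
            = Fc := by
          rw [hz, h, hval, CayAux.qpoly_eval_top S.card hk1]
        rw [hEact i, hvaltop, CayAux.helper_mulVec]
        funext x
        have hsumb : ∑ y, u y
            = ((Fintype.card G : ℝ)) * u x := by
          rw [Finset.sum_congr rfl (fun y _ => hconst y x), Finset.sum_const, Finset.card_univ,
            nsmul_eq_mul]
        have horthwb : ∑ y, w y * u y = 0 :=
          CayAux.orth hherm hw (hmv i) (by rw [hzk]; exact fun hc => hkne hc.symm)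
        show Fc * u x = _
        rw [hsumb, horthwb]
        field_simp
        ring
      · -- eigenvalue -S.card
        have hzk : hherm.eigenvalues i = -(S.card:ℝ) := by rw [hz, h]; push_cast; ring
        have hu2 : cayleyMatrix (S : Set G) *ᵥ u = (-(S.card:ℝ)) • u := by
          rw [← hzk]; exact hmv i
        have hpar := CayAux.eig_neg_parallel S hsym hgen hw hu2
        have hw1 : w 1 ≠ 0 := by
          intro hc
          have h2 := habs 1
          rw [hc, abs_zero] at h2
          linarith
        have hvalbot : (CayAux.qpoly S.card).eval₂ (Int.castRingHom ℝ) (hherm.eigenvalues i)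
            = -Fc := by
          rw [hz, h]
          rw [show ((-(S.card:ℤ) : ℤ) : ℝ) = ((-(S.card:ℤ) : ℤ) : ℝ) from rfl, hval,
            CayAux.qpoly_eval_bot S.card hk1, hFc]
          push_cast; ring
        rw [hEact i, hvalbot]
        show (-Fc) • u = _
        refine (smul_right_injective (G → ℝ) hw1 ?_).symm
        calc w 1 • ((Matrix.of fun x y : G => Fc/(Fintype.card G : ℝ)
              + (-(Fc/((Fintype.card G : ℝ)*M^2))) * (w x * w y)) *ᵥ u)
            = (Matrix.of fun x y : G => Fc/(Fintype.card G : ℝ)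
              + (-(Fc/((Fintype.card G : ℝ)*M^2))) * (w x * w y))
                *ᵥ (w 1 • u) := (Matrix.mulVec_smul _ _ _).symm
          _ = (Matrix.of fun x y : G => Fc/(Fintype.card G : ℝ)
              + (-(Fc/((Fintype.card G : ℝ)*M^2))) * (w x * w y))
                *ᵥ (u 1 • w) := by rw [hpar]
          _ = u 1 • ((Matrix.of fun x y : G =>
                Fc/(Fintype.card G : ℝ)
              + (-(Fc/((Fintype.card G : ℝ)*M^2))) * (w x * w y)) *ᵥ w) :=
            Matrix.mulVec_smul _ _ _
          _ = u 1 • ((-Fc) • w) := by rw [hBw]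
          _ = (-Fc) • (u 1 • w) := smul_comm _ _ _
          _ = (-Fc) • (w 1 • u) := by rw [hpar]
          _ = w 1 • ((-Fc) • u) := smul_comm _ _ _
      · -- middle eigenvalues
        have hval0 : (CayAux.qpoly S.card).eval₂ (Int.castRingHom ℝ) (hherm.eigenvalues i)
            = 0 := by
          rw [hz, hval, CayAux.qpoly_eval_zero S.card z h.1 h.2]
          norm_num
        have hsumb : ∑ y, u y = 0 := by
          have horth := CayAux.orth hherm hones (hmv i) (by
            rw [hz]
            intro hc
            have : (S.card:ℤ) = z := by exact_mod_cast hc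
            omega)
          simpa using horth
        have horthwb : ∑ y, w y * u y = 0 :=
          CayAux.orth hherm hw (hmv i) (by
            rw [hz]
            intro hc
            have : -(S.card:ℤ) = z := by exact_mod_cast hc
            omega)
        rw [hEact i, hval0, CayAux.helper_mulVec]
        funext x
        rw [hsumb, horthwb]
        simp
    -- extract entry (s₀, 1)
    have hws0 : w s₀ = - w 1 := by
      have h2 := hrel s₀ s₀ hs₀
      rw [inv_mul_cancel] at h2
      linarith
    have hentry : ((Polynomial.aeval (CayAux.intCayley S) (CayAux.qpoly S.card)) s₀ 1 : ℝ)
        * (Fintype.card G : ℝ) = 2 * Fc := by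
      have h2 := congrFun (congrFun (hEint.symm.trans hEB) s₀) 1
      rw [Matrix.map_apply] at h2
      rw [h2]
      show (Fc/(Fintype.card G : ℝ) + (-(Fc/((Fintype.card G : ℝ)*M^2))) * (w s₀ * w 1))
          * (Fintype.card G : ℝ) = 2 * Fc
      rw [hws0]
      have : - w 1 * w 1 = -M^2 := by
        have := hwsq 1
        linarith
      rw [this]
      field_simp
      ring
    have hZ : ((Polynomial.aeval (CayAux.intCayley S) (CayAux.qpoly S.card)) s₀ 1)
        * (Fintype.card G : ℤ) = 2 * ((2*S.card-1).factorial : ℤ) := by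
      rw [hFc] at hentry
      exact_mod_cast hentry
    have hdvd : (Fintype.card G : ℤ) ∣ (2 * ((2*S.card-1).factorial : ℕ) : ℤ) := by
      refine ⟨(Polynomial.aeval (CayAux.intCayley S) (CayAux.qpoly S.card)) s₀ 1, ?_⟩
      push_cast
      push_cast at hZ
      linarith
    exact_mod_cast hdvd
  · -- no eigenvalue -S.card
    have hB0 : ∀ u : G → ℝ, (Matrix.of fun x y : G => Fc/(Fintype.card G : ℝ)
          + (0:ℝ) * ((fun _ : G => (0:ℝ)) x * (fun _ : G => (0:ℝ)) y)) *ᵥ u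
        = fun _ => Fc/(Fintype.card G : ℝ) * (∑ y, u y) := by
      intro u
      rw [CayAux.helper_mulVec]
      funext x
      simp
    have hEB : Polynomial.aeval (cayleyMatrix (S : Set G)) (CayAux.qpoly S.card)
        = Matrix.of fun x y : G => Fc/(Fintype.card G : ℝ)
          + (0:ℝ) * ((fun _ : G => (0:ℝ)) x * (fun _ : G => (0:ℝ)) y) := by
      apply CayAux.matrix_eq_on_basis hherm
      intro i
      set u : G → ℝ := ⇑(hherm.eigenvectorBasis i) with hu
      obtain ⟨z, hz⟩ := hintegral i
      have hzabs : |z| ≤ (S.card:ℤ) := by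
        have hb := hbound i
        rw [hz] at hb
        exact_mod_cast hb
      obtain ⟨hza, hzb⟩ := abs_le.mp hzabs
      rcases (by omega : z = (S.card:ℤ) ∨ z = -(S.card:ℤ)
          ∨ (1 - (S.card:ℤ) ≤ z ∧ z ≤ (S.card:ℤ) - 1)) with h|h|h
      · have hzk : hherm.eigenvalues i = (S.card:ℝ) := by rw [hz, h]; push_cast; ring
        have hconst := CayAux.eig_top S hsym hgen (by rw [← hzk]; exact hmv i)
        have hvaltop : (CayAux.qpoly S.card).eval₂ (Int.castRingHom ℝ) (hherm.eigenvalues i)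
            = Fc := by
          rw [hz, h, hval, CayAux.qpoly_eval_top S.card hk1]
        rw [hEact i, hvaltop, hB0]
        funext x
        have hsumb : ∑ y, u y
            = ((Fintype.card G : ℝ)) * u x := by
          rw [Finset.sum_congr rfl (fun y _ => hconst y x), Finset.sum_const, Finset.card_univ,
            nsmul_eq_mul]
        show Fc * u x = _
        rw [hsumb]
        field_simp
      · exfalso
        have hzk : hherm.eigenvalues i = -(S.card:ℝ) := by rw [hz, h]; push_cast; ring
        exact hneg ⟨u, (by rw [hu]; exact hbne i), by rw [← hzk]; exact hmv i⟩
      · have hval0 : (CayAux.qpoly S.card).eval₂ (Int.castRingHom ℝ) (hherm.eigenvalues i)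
            = 0 := by
          rw [hz, hval, CayAux.qpoly_eval_zero S.card z h.1 h.2]
          norm_num
        have hsumb : ∑ y, u y = 0 := by
          have horth := CayAux.orth hherm hones (hmv i) (by
            rw [hz]
            intro hc
            have : (S.card:ℤ) = z := by exact_mod_cast hc
            omega)
          simpa using horth
        rw [hEact i, hval0, hB0]
        funext x
        rw [hsumb]
        simp
    have hentry : ((Polynomial.aeval (CayAux.intCayley S) (CayAux.qpoly S.card)) 1 1 : ℝ)
        * (Fintype.card G : ℝ) = Fc := by
      have h2 := congrFun (congrFun (hEint.symm.trans hEB) 1) 1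
      rw [Matrix.map_apply] at h2
      rw [h2]
      show (Fc/(Fintype.card G : ℝ) + (0:ℝ) * ((0:ℝ) * (0:ℝ))) * (Fintype.card G : ℝ) = Fc
      field_simp
      ring
    have hZ : ((Polynomial.aeval (CayAux.intCayley S) (CayAux.qpoly S.card)) 1 1)
        * (Fintype.card G : ℤ) = ((2*S.card-1).factorial : ℤ) := by
      rw [hFc] at hentry
      exact_mod_cast hentry
    have hdvd : (Fintype.card G : ℤ) ∣ (((2*S.card-1).factorial : ℕ) : ℤ) :=
      ⟨(Polynomial.aeval (CayAux.intCayley S) (CayAux.qpoly S.card)) 1 1, by push_cast; linarith⟩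
    have : Fintype.card G ∣ (2*S.card-1).factorial := by exact_mod_cast hdvd
    exact this.mul_left 2
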